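/- For every n ≥ 1, applying the operator ∏_{1 ≤ p, q ≤ n} (id + E_{k_q} Δ_{k_p}) (the product over ALL ordered pairs (p, q) with 1 ≤ p, q ≤ n, including p = q and p > q) to the polynomial ∏_{1 ≤ i < j ≤ n} (k_j − k_i)/(j − i) returns the same polynomial ∏_{1 ≤ i < j ≤ n} (k_j − k_i)/(j − i). -/

import Mathlib

open MvPolynomial Finset

/-- The shift of a polynomial by an integer vector `a`:
`(shiftPoly a p)(x₁,…,xₙ) = p(x₁ + a₁, …, xₙ + aₙ)`. -/
noncomputable def shiftPoly {n : ℕ} (a : Fin n → ℤ) (p : MvPolynomial (Fin n) ℚ) :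
    MvPolynomial (Fin n) ℚ :=
  aeval (fun j => X j + C ((a j : ℚ))) p

/-- A Laurent polynomial `Q` in the commuting shift operators `E₁,…,Eₙ` (an element of the
group algebra `ℚ[ℤⁿ]`, the exponent vector recording the shift) acts on polynomials. -/
noncomputable def opApply {n : ℕ} (Q : AddMonoidAlgebra ℚ (Fin n → ℤ))
    (p : MvPolynomial (Fin n) ℚ) : MvPolynomial (Fin n) ℚ :=
  Q.coeff.sum fun a c => c • shiftPoly a p

/-- The shift operator `E_{x_i}` as an element of the operator algebra. -/
noncomputable def Esh {n : ℕ} (i : Fin n) : AddMonoidAlgebra ℚ (Fin n → ℤ) :=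
  AddMonoidAlgebra.single (Pi.single i 1) 1

/-- The inverse shift operator `E_{x_i}⁻¹`. -/
noncomputable def EshInv {n : ℕ} (i : Fin n) : AddMonoidAlgebra ℚ (Fin n → ℤ) :=
  AddMonoidAlgebra.single (Pi.single i (-1)) 1

/-- The difference operator `Δ_{x_i} = E_{x_i} - id`. -/
noncomputable def Dlt {n : ℕ} (i : Fin n) : AddMonoidAlgebra ℚ (Fin n → ℤ) :=
  Esh i - 1

/-- All pairs `(p, q)` with `p < q`. -/
def pairs (n : ℕ) : Finset (Fin n × Fin n) :=
  Finset.univ.filter fun p => p.1 < p.2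

/-- The polynomial `∏_{1 ≤ i < j ≤ n} (x_j - x_i) / (j - i)`. -/
noncomputable def vandQ (n : ℕ) : MvPolynomial (Fin n) ℚ :=
  ∏ p ∈ pairs n, (C ((((p.2 : ℕ) : ℚ) - ((p.1 : ℕ) : ℚ))⁻¹) * (X p.2 - X p.1))

variable {n : ℕ}

-- shift as AlgHom
noncomputable def shiftAlg {n : ℕ} (a : Fin n → ℤ) :
    MvPolynomial (Fin n) ℚ →ₐ[ℚ] MvPolynomial (Fin n) ℚ :=
  aeval (fun j => X j + C ((a j : ℚ)))

lemma shiftPoly_eq {n : ℕ} (a : Fin n → ℤ) (p) : shiftPoly a p = shiftAlg a p := rfl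

lemma shiftAlg_comp {n : ℕ} (a b : Fin n → ℤ) :
    (shiftAlg a).comp (shiftAlg b) = shiftAlg (a + b) := by
  apply MvPolynomial.algHom_ext
  intro i
  simp [shiftAlg, add_assoc]

noncomputable def shiftL {n : ℕ} (a : Fin n → ℤ) :
    Module.End ℚ (MvPolynomial (Fin n) ℚ) := (shiftAlg a).toLinearMap

noncomputable def Φ {n : ℕ} : AddMonoidAlgebra ℚ (Fin n → ℤ) →ₐ[ℚ]
    Module.End ℚ (MvPolynomial (Fin n) ℚ) :=
  AddMonoidAlgebra.lift ℚ (Module.End ℚ (MvPolynomial (Fin n) ℚ)) (Fin n → ℤ)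
    { toFun := fun a => shiftL (Multiplicative.toAdd a)
      map_one' := by
        refine LinearMap.ext fun p => ?_
        simpa [shiftL, shiftAlg] using aeval_X_left_apply p
      map_mul' := fun a b => by
        refine LinearMap.ext fun p => ?_
        have := congrArg (fun (F : MvPolynomial (Fin n) ℚ →ₐ[ℚ] MvPolynomial (Fin n) ℚ) => F p)
          (shiftAlg_comp (Multiplicative.toAdd a) (Multiplicative.toAdd b))
        simpa [shiftL, Module.End.mul_apply] using this.symm }

lemma opApply_eq {n : ℕ} (Q : AddMonoidAlgebra ℚ (Fin n → ℤ)) (p) :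
    opApply Q p = Φ Q p := by
  rw [opApply, Φ, AddMonoidAlgebra.lift_apply]
  rw [Finsupp.sum, Finsupp.sum, LinearMap.coe_sum, Finset.sum_apply]
  refine Finset.sum_congr rfl fun a _ => ?_
  simp [shiftL, shiftPoly_eq]

lemma Φ_Esh {n : ℕ} (i : Fin n) : Φ (Esh i) = shiftL (Pi.single i 1) := by
  rw [Esh, Φ, AddMonoidAlgebra.lift_single]
  simp

variable {n : ℕ}

lemma shiftPoly_one (a : Fin n → ℤ) : shiftPoly a 1 = 1 := by simp [shiftPoly]

lemma shiftPoly_mul (a : Fin n → ℤ) (p q) :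
    shiftPoly a (p * q) = shiftPoly a p * shiftPoly a q := by simp [shiftPoly]

lemma shiftPoly_X_mul (a : Fin n → ℤ) (j : Fin n) (p) :
    shiftPoly a (X j * p) = (X j + C ((a j : ℚ))) * shiftPoly a p := by
  rw [shiftPoly_mul]; simp [shiftPoly]

/-- key monomial lemma -/
lemma shift_monomial_sub (a : Fin n → ℤ) :
    ∀ N (m : Fin n →₀ ℕ), (m.sum fun _ e => e) ≤ N →
      shiftPoly a (monomial m 1) - monomial m 1 = 0 ∨
      (shiftPoly a (monomial m 1) - monomial m 1).totalDegree < m.sum fun _ e => e := by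
  intro N
  induction N with
  | zero =>
    intro m hm
    left
    have hm0 : m = 0 := by
      ext x
      have := Finsupp.le_degree x m
      have hdeg : m.degree = m.sum fun _ e => e := by
        rw [Finsupp.degree, Finsupp.sum]; rfl
      simp only [Finsupp.coe_zero, Pi.zero_apply]
      omega
    subst hm0
    rw [monomial_zero']
    simp [shiftPoly]
  | succ N ih =>
    intro m hm
    by_cases h0 : m = 0
    · left; subst h0; rw [monomial_zero']; simp [shiftPoly]
    · right
      obtain ⟨j, hj⟩ := Finsupp.support_nonempty_iff.2 h0
      have hmj : 1 ≤ m j := Nat.one_le_iff_ne_zero.2 (Finsupp.mem_support_iff.1 hj)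
      set m'' := m - Finsupp.single j 1 with hm''
      have hsplit : m = Finsupp.single j 1 + m'' := by
        ext x
        by_cases hx : x = j
        · subst hx; simp [hm'', Finsupp.single_eq_same]; omega
        · simp [hm'', Finsupp.single_eq_of_ne' (Ne.symm hx)]
      have hsum : (m.sum fun _ e => e) = (m''.sum fun _ e => e) + 1 := by
        rw [hsplit, Finsupp.sum_add_index' (fun _ => rfl) (fun _ _ _ => rfl)]
        simp [add_comm]
      have hmon : (monomial m (1:ℚ)) = X j * monomial m'' 1 := by
        rw [hsplit, monomial_single_add, pow_one]
      set q : MvPolynomial (Fin n) ℚ := monomial m'' 1 with hq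
      set r := shiftPoly a q - q with hr
      have hshift : shiftPoly a (monomial m 1) = (X j + C ((a j : ℚ))) * (q + r) := by
        rw [hmon, shiftPoly_X_mul]
        congr 1
        rw [hr]; ring
      have hqdeg : q.totalDegree = m''.sum fun _ e => e := totalDegree_monomial _ one_ne_zero
      have ihr := ih m'' (by omega)
      rw [← hq, ← hr] at ihr
      have hdiff : shiftPoly a (monomial m 1) - monomial m 1
          = X j * r + (C ((a j : ℚ)) * (q + r)) := by
        rw [hshift, hmon]; ring
      rw [hdiff, hsum]
      rcases ihr with h | h
      · rw [h]
        calc (X j * 0 + C ((a j : ℚ)) * (q + 0)).totalDegree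
            = (C ((a j : ℚ)) * q).totalDegree := by ring_nf
          _ ≤ (C ((a j : ℚ)) : MvPolynomial (Fin n) ℚ).totalDegree + q.totalDegree :=
              totalDegree_mul _ _
          _ < _ := by rw [totalDegree_C, hqdeg]; omega
      · have h1 : (X j * r).totalDegree ≤ 1 + r.totalDegree := by
          calc (X j * r).totalDegree ≤ (X j : MvPolynomial (Fin n) ℚ).totalDegree + r.totalDegree :=
                totalDegree_mul _ _
            _ ≤ 1 + r.totalDegree := by rw [totalDegree_X]
        have h2 : (C ((a j : ℚ)) * (q + r)).totalDegree ≤ max q.totalDegree r.totalDegree := by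
          calc (C ((a j : ℚ)) * (q + r)).totalDegree
              ≤ (C ((a j : ℚ)) : MvPolynomial (Fin n) ℚ).totalDegree + (q + r).totalDegree :=
                totalDegree_mul _ _
            _ ≤ max q.totalDegree r.totalDegree := by
                rw [totalDegree_C, zero_add]; exact totalDegree_add _ _
        have := totalDegree_add (X j * r) (C ((a j : ℚ)) * (q + r))
        rw [hqdeg] at h2
        omega

lemma shiftPoly_sum (a : Fin n → ℤ) {ι} (s : Finset ι) (f : ι → MvPolynomial (Fin n) ℚ) :
    shiftPoly a (∑ i ∈ s, f i) = ∑ i ∈ s, shiftPoly a (f i) := by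
  simp [shiftPoly]

lemma shiftPoly_smul (a : Fin n → ℤ) (c : ℚ) (p) :
    shiftPoly a (c • p) = c • shiftPoly a p := by simp [shiftPoly]

lemma shift_sub_lt (a : Fin n → ℤ) (p : MvPolynomial (Fin n) ℚ) (hp : 1 ≤ p.totalDegree) :
    (shiftPoly a p - p).totalDegree < p.totalDegree := by
  have hdec : shiftPoly a p - p =
      ∑ m ∈ p.support, (coeff m p) • (shiftPoly a (monomial m 1) - monomial m 1) := by
    conv_lhs => rw [as_sum p]
    rw [shiftPoly_sum, ← Finset.sum_sub_distrib]
    refine Finset.sum_congr rfl fun m _ => ?_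
    rw [smul_sub, ← shiftPoly_smul]
    congr 2 <;> rw [smul_monomial, smul_eq_mul, mul_one]
  rw [hdec]
  refine lt_of_le_of_lt (totalDegree_finset_sum _ _) ?_
  refine lt_of_le_of_lt (Finset.sup_le (fun m hm => ?_)) (show p.totalDegree - 1 < p.totalDegree by omega)
  refine le_trans (totalDegree_smul_le _ _) ?_
  have hmle : (m.sum fun _ e => e) ≤ p.totalDegree := le_totalDegree hm
  rcases shift_monomial_sub a (m.sum fun _ e => e) m le_rfl with h | h
  · rw [h]; simp
  · omega

lemma eq_C_of_totalDegree_eq_zero {p : MvPolynomial (Fin n) ℚ} (hp : p.totalDegree = 0) :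
    p = C (coeff 0 p) := by
  rw [totalDegree_eq_zero_iff] at hp
  conv_lhs => rw [as_sum p]
  rcases Finset.eq_empty_or_nonempty p.support with h | ⟨m, hm⟩
  · rw [h]
    have : coeff 0 p = 0 := by
      by_contra hc
      have h0 : (0 : Fin n →₀ ℕ) ∈ p.support := MvPolynomial.mem_support_iff.2 hc
      rw [h] at h0
      exact absurd h0 (Finset.notMem_empty _)
    simp [this]
  · have hm0 : m = 0 := by ext x; simp only [Finsupp.coe_zero, Pi.zero_apply]; exact hp m hm x
    have hsup : p.support = {(0 : Fin n →₀ ℕ)} := by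
      apply Finset.eq_singleton_iff_unique_mem.2
      refine ⟨hm0 ▸ hm, fun y hy => ?_⟩
      ext x; simp only [Finsupp.coe_zero, Pi.zero_apply]; exact hp y hy x
    rw [hsup, Finset.sum_singleton, monomial_zero']

lemma shiftPoly_C (a : Fin n → ℤ) (c : ℚ) : shiftPoly a (C c) = C c := by simp [shiftPoly]

lemma totalDegree_shiftPoly_le (a : Fin n → ℤ) (p : MvPolynomial (Fin n) ℚ) :
    (shiftPoly a p).totalDegree ≤ p.totalDegree := by
  rcases Nat.eq_zero_or_pos p.totalDegree with h | h
  · rw [eq_C_of_totalDegree_eq_zero h, shiftPoly_C, totalDegree_C]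
  · have : shiftPoly a p = p + (shiftPoly a p - p) := by ring
    rw [this]
    refine le_trans (totalDegree_add _ _) ?_
    have := shift_sub_lt a p h
    omega


lemma prod_pairs_eq {M : Type*} [CommMonoid M] (f : Fin n × Fin n → M) :
    ∏ p ∈ pairs n, f p = ∏ i : Fin n, ∏ j ∈ Ioi i, f (i, j) := by
  rw [Finset.prod_sigma']
  refine Finset.prod_bij (fun x _ => ⟨x.1, x.2⟩) ?_ ?_ ?_ ?_
  · rintro ⟨i, j⟩ hx
    simp only [pairs, Finset.mem_filter, Finset.mem_univ, true_and] at hx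
    simp [Finset.mem_sigma, Finset.mem_Ioi, hx]
  · rintro ⟨i, j⟩ hx ⟨i', j'⟩ hx' h
    simpa using h
  · rintro ⟨i, j⟩ hx
    simp only [Finset.mem_sigma, Finset.mem_univ, true_and, Finset.mem_Ioi] at hx
    exact ⟨(i, j), by simp [pairs, hx], rfl⟩
  · intros; rfl

lemma vand_det :
    ∏ p ∈ pairs n, (X p.2 - X p.1 : MvPolynomial (Fin n) ℚ) =
      (Matrix.vandermonde fun i => (X i : MvPolynomial (Fin n) ℚ)).det := by
  rw [Matrix.det_vandermonde, prod_pairs_eq]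

lemma rename_vand (σ : Equiv.Perm (Fin n)) :
    rename σ (∏ p ∈ pairs n, (X p.2 - X p.1 : MvPolynomial (Fin n) ℚ)) =
      (Equiv.Perm.sign σ : ℤ) • ∏ p ∈ pairs n, (X p.2 - X p.1 : MvPolynomial (Fin n) ℚ) := by
  have h1 : rename σ (∏ p ∈ pairs n, (X p.2 - X p.1 : MvPolynomial (Fin n) ℚ))
      = ∏ p ∈ pairs n, (X (σ p.2) - X (σ p.1) : MvPolynomial (Fin n) ℚ) := by
    rw [map_prod]
    refine Finset.prod_congr rfl fun p _ => ?_
    simp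
  have h2 : ∏ p ∈ pairs n, (X (σ p.2) - X (σ p.1) : MvPolynomial (Fin n) ℚ)
      = ((Matrix.vandermonde fun i => (X i : MvPolynomial (Fin n) ℚ)).submatrix σ id).det := by
    have hsub : ((Matrix.vandermonde fun i => (X i : MvPolynomial (Fin n) ℚ)).submatrix σ id)
        = Matrix.vandermonde fun i => (X (σ i) : MvPolynomial (Fin n) ℚ) := by
      ext i j
      simp [Matrix.vandermonde]
    rw [hsub, Matrix.det_vandermonde, prod_pairs_eq]
  rw [h1, h2, Matrix.det_permute, ← vand_det]
  simp [zsmul_eq_mul]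

noncomputable def permExp (σ : Equiv.Perm (Fin n)) : (Fin n → ℤ) ≃+ (Fin n → ℤ) :=
  { toEquiv := σ.arrowCongr (Equiv.refl ℤ), map_add' := fun _ _ => rfl }

lemma permExp_apply (σ : Equiv.Perm (Fin n)) (a : Fin n → ℤ) :
    permExp σ a = a ∘ σ.symm := rfl

noncomputable def ρ (σ : Equiv.Perm (Fin n)) :
    AddMonoidAlgebra ℚ (Fin n → ℤ) ≃ₐ[ℚ] AddMonoidAlgebra ℚ (Fin n → ℤ) :=
  AddMonoidAlgebra.domCongr ℚ ℚ (permExp σ)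

lemma permExp_single (σ : Equiv.Perm (Fin n)) (i : Fin n) :
    permExp σ (Pi.single i (1:ℤ)) = Pi.single (σ i) 1 := by
  funext x
  rw [permExp_apply]
  simp only [Function.comp_apply]
  simp [Pi.single_apply, Equiv.symm_apply_eq]

lemma rho_Esh (σ : Equiv.Perm (Fin n)) (i : Fin n) : ρ σ (Esh i) = Esh (σ i) := by
  rw [Esh, Esh, ρ, AddMonoidAlgebra.domCongr_single, permExp_single]

lemma rho_Dlt (σ : Equiv.Perm (Fin n)) (i : Fin n) : ρ σ (Dlt i) = Dlt (σ i) := by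
  rw [Dlt, Dlt, map_sub, map_one, rho_Esh]

lemma rename_shiftPoly (σ : Equiv.Perm (Fin n)) (a : Fin n → ℤ) (p) :
    shiftPoly (permExp σ a) (rename σ p) = rename σ (shiftPoly a p) := by
  have h : (shiftAlg (permExp σ a)).comp (rename (R := ℚ) (σ : Fin n → Fin n))
      = (rename (σ : Fin n → Fin n)).comp (shiftAlg a) := by
    apply MvPolynomial.algHom_ext
    intro i
    simp [shiftAlg, permExp_apply, Function.comp]
  calc shiftPoly (permExp σ a) (rename σ p)
      = ((shiftAlg (permExp σ a)).comp (rename (σ : Fin n → Fin n))) p := rfl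
    _ = ((rename (σ : Fin n → Fin n)).comp (shiftAlg a)) p := by rw [h]
    _ = rename σ (shiftPoly a p) := rfl

lemma Φ_rename (σ : Equiv.Perm (Fin n)) (Q : AddMonoidAlgebra ℚ (Fin n → ℤ)) (p) :
    Φ (ρ σ Q) (rename σ p) = rename σ (Φ Q p) := by
  induction Q using AddMonoidAlgebra.induction_linear with
  | zero => simp
  | add f g hf hg =>
    rw [map_add, map_add, LinearMap.add_apply, hf, hg, map_add, LinearMap.add_apply, map_add]
  | single a c =>
    rw [ρ, AddMonoidAlgebra.domCongr_single]
    show Φ (AddMonoidAlgebra.single (permExp σ a) c) _ = _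
    rw [Φ, AddMonoidAlgebra.lift_single, AddMonoidAlgebra.lift_single]
    rw [LinearMap.smul_apply, LinearMap.smul_apply, map_smul]
    congr 1
    exact rename_shiftPoly σ a p

lemma rho_T (σ : Equiv.Perm (Fin n)) :
    ρ σ (∏ p ∈ (Finset.univ : Finset (Fin n × Fin n)), (1 + Esh p.2 * Dlt p.1)) =
      ∏ p ∈ (Finset.univ : Finset (Fin n × Fin n)), (1 + Esh p.2 * Dlt p.1) := by
  rw [map_prod]
  have h : ∀ p : Fin n × Fin n, ρ σ (1 + Esh p.2 * Dlt p.1) = 1 + Esh (σ p.2) * Dlt (σ p.1) :=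
    fun p => by rw [map_add, map_one, map_mul, rho_Esh, rho_Dlt]
  rw [Finset.prod_congr rfl (fun p _ => h p)]
  exact Fintype.prod_equiv (Equiv.prodCongr σ σ) _ _ (fun p => rfl)

lemma rename_vandQ (σ : Equiv.Perm (Fin n)) :
    rename σ (vandQ n) = (Equiv.Perm.sign σ : ℤ) • vandQ n := by
  rw [vandQ, map_prod]
  have h : ∀ p : Fin n × Fin n,
      rename σ (C ((((p.2 : ℕ) : ℚ) - ((p.1 : ℕ) : ℚ))⁻¹) * (X p.2 - X p.1))
        = C ((((p.2 : ℕ) : ℚ) - ((p.1 : ℕ) : ℚ))⁻¹) * rename σ (X p.2 - X p.1) := by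
    intro p; rw [map_mul, rename_C]
  rw [Finset.prod_congr rfl (fun p _ => h p), Finset.prod_mul_distrib]
  have h2 : ∏ x ∈ pairs n, rename σ (X x.2 - X x.1 : MvPolynomial (Fin n) ℚ)
      = (Equiv.Perm.sign σ : ℤ) • ∏ p ∈ pairs n, (X p.2 - X p.1 : MvPolynomial (Fin n) ℚ) := by
    rw [← map_prod]; exact rename_vand σ
  rw [h2, mul_smul_comm]
  congr 1
  rw [Finset.prod_mul_distrib]

lemma alt_support_ne {D : MvPolynomial (Fin n) ℚ}
    (h : ∀ i j : Fin n, i ≠ j → rename (Equiv.swap i j) D = -D)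
    {μ : Fin n →₀ ℕ} (hμ : μ ∈ D.support) : Function.Injective (μ : Fin n → ℕ) := by
  intro i j hij
  by_contra hne
  have hmap : Finsupp.mapDomain (⇑(Equiv.swap i j)) μ = μ := by
    ext x
    rw [show (⇑(Equiv.swap i j) : Fin n → Fin n) = ⇑(Equiv.swap i j : Fin n ≃ Fin n) from rfl]
    rw [Finsupp.mapDomain_equiv_apply]
    rw [Equiv.symm_swap]
    rcases Equiv.swap_apply_def i j x with _
    by_cases hx1 : x = i
    · subst hx1; rw [Equiv.swap_apply_left]; omega
    · by_cases hx2 : x = j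
      · subst hx2; rw [Equiv.swap_apply_right]; omega
      · rw [Equiv.swap_apply_of_ne_of_ne hx1 hx2]
  have hcoeff : coeff μ D = coeff μ (rename (Equiv.swap i j) D) := by
    conv_rhs => rw [← hmap]
    rw [coeff_rename_mapDomain _ (Equiv.swap i j).injective]
  rw [h i j hne, coeff_neg] at hcoeff
  have : coeff μ D = 0 := by linarith
  exact MvPolynomial.mem_support_iff.1 hμ this

lemma card_pairs : (pairs n).card = ∑ j : Fin n, (j : ℕ) := by
  have hb : (pairs n).card = ((Finset.univ : Finset (Fin n)).sigma fun j => Iio j).card := by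
    refine Finset.card_bij (fun x _ => ⟨x.2, x.1⟩) ?_ ?_ ?_
    · rintro ⟨i, j⟩ hx
      simp only [pairs, Finset.mem_filter, Finset.mem_univ, true_and] at hx
      simp [Finset.mem_sigma, Finset.mem_Iio, hx]
    · rintro ⟨i, j⟩ hx ⟨i', j'⟩ hx' hh
      simpa [Prod.ext_iff, And.comm] using hh
    · rintro ⟨j, i⟩ hx
      simp only [Finset.mem_sigma, Finset.mem_univ, true_and, Finset.mem_Iio] at hx
      exact ⟨(i, j), by simp [pairs, hx], rfl⟩
  rw [hb, Finset.card_sigma]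
  refine Finset.sum_congr rfl fun j _ => Fin.card_Iio j

lemma strictMono_le {g : Fin n → ℕ} (hg : StrictMono g) : ∀ m (hm : m < n), m ≤ g ⟨m, hm⟩ := by
  intro m
  induction m with
  | zero => intro _; exact Nat.zero_le _
  | succ m ih =>
    intro hm
    have hm' : m < n := Nat.lt_of_succ_lt hm
    have hlt : (⟨m, hm'⟩ : Fin n) < ⟨m + 1, hm⟩ := by simp [Fin.lt_def]
    have := hg hlt
    have := ih hm'
    omega

lemma card_pairs_le_sum {μ : Fin n → ℕ} (hμ : Function.Injective μ) :
    (pairs n).card ≤ ∑ i : Fin n, μ i := by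
  set σ := Tuple.sort μ with hσ
  have hmono : Monotone (μ ∘ σ) := Tuple.monotone_sort μ
  have hinj : Function.Injective (μ ∘ σ) := hμ.comp σ.injective
  have hsm : StrictMono (μ ∘ σ) := hmono.strictMono_of_injective hinj
  have hsum : ∑ i : Fin n, μ (σ i) = ∑ i : Fin n, μ i := Equiv.sum_comp σ μ
  rw [← hsum, card_pairs]
  refine Finset.sum_le_sum fun i _ => ?_
  have := strictMono_le hsm i i.isLt
  simpa using this

lemma vandQ_deg : (vandQ n).totalDegree ≤ (pairs n).card := by
  rw [vandQ]
  refine le_trans (totalDegree_finset_prod _ _) ?_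
  rw [Finset.card_eq_sum_ones]
  refine Finset.sum_le_sum fun p _ => ?_
  refine le_trans (totalDegree_mul _ _) ?_
  rw [totalDegree_C, zero_add]
  refine le_trans (totalDegree_sub _ _) ?_
  simp [totalDegree_X]

lemma totalDegree_opApply_le (Q : AddMonoidAlgebra ℚ (Fin n → ℤ)) (p) :
    (opApply Q p).totalDegree ≤ p.totalDegree := by
  rw [opApply, Finsupp.sum]
  refine le_trans (totalDegree_finset_sum _ _) (Finset.sup_le fun a _ => ?_)
  exact le_trans (totalDegree_smul_le _ _) (totalDegree_shiftPoly_le a p)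

lemma totalDegree_Φ_le (Q : AddMonoidAlgebra ℚ (Fin n → ℤ)) (p) :
    (Φ Q p).totalDegree ≤ p.totalDegree := by
  rw [← opApply_eq]; exact totalDegree_opApply_le Q p

lemma Φ_Dlt (i : Fin n) (p) : Φ (Dlt i) p = shiftPoly (Pi.single i 1) p - p := by
  rw [Dlt, map_sub, map_one, LinearMap.sub_apply, Φ_Esh, Module.End.one_apply]
  rfl

lemma term_decomp (S : Finset (Fin n × Fin n)) (hS : S.Nonempty) (V : MvPolynomial (Fin n) ℚ) :
    ∃ (A : AddMonoidAlgebra ℚ (Fin n → ℤ)) (i : Fin n), Φ (∏ x ∈ S, (Esh x.2 * Dlt x.1)) V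
      = Φ A (shiftPoly (Pi.single i 1) V - V) := by
  obtain ⟨x₀, hx₀⟩ := hS
  refine ⟨Esh x₀.2 * ∏ x ∈ S.erase x₀, (Esh x.2 * Dlt x.1), x₀.1, ?_⟩
  have hprod : ∏ x ∈ S, (Esh x.2 * Dlt x.1)
      = (Esh x₀.2 * ∏ x ∈ S.erase x₀, (Esh x.2 * Dlt x.1)) * Dlt x₀.1 := by
    rw [← Finset.mul_prod_erase S _ hx₀]
    ring
  rw [hprod, map_mul, Module.End.mul_apply, Φ_Dlt]

/-- Applying `∏_{1 ≤ p, q ≤ n} (id + E_{k_q} Δ_{k_p})` (over all ordered pairs) to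
`∏_{1 ≤ i < j ≤ n} (k_j - k_i)/(j - i)` returns the same polynomial. -/
theorem full_operator_product_fixes_vandermonde (n : ℕ) (hn : 1 ≤ n) :
    opApply (∏ p ∈ (Finset.univ : Finset (Fin n × Fin n)), (1 + Esh p.2 * Dlt p.1))
        (vandQ n) = vandQ n := by
  rw [opApply_eq]
  set T : AddMonoidAlgebra ℚ (Fin n → ℤ) :=
    ∏ p ∈ (Finset.univ : Finset (Fin n × Fin n)), (1 + Esh p.2 * Dlt p.1) with hTdef
  set V := vandQ n with hV
  have hT : T = ∑ S ∈ (Finset.univ : Finset (Fin n × Fin n)).powerset,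
      ∏ x ∈ S, (Esh x.2 * Dlt x.1) := by
    rw [hTdef, Finset.prod_congr rfl (fun p _ => add_comm 1 (Esh p.2 * Dlt p.1)),
      Finset.prod_add]
    exact Finset.sum_congr rfl fun S _ => by rw [Finset.prod_const_one, mul_one]
  have hsplit : Φ T V = V + ∑ S ∈ ((Finset.univ : Finset (Fin n × Fin n)).powerset).erase ∅,
      Φ (∏ x ∈ S, (Esh x.2 * Dlt x.1)) V := by
    rw [hT, map_sum, LinearMap.coe_sum, Finset.sum_apply,
      ← Finset.add_sum_erase _ _ (Finset.empty_mem_powerset _)]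
    congr 1
    rw [Finset.prod_empty, map_one, Module.End.one_apply]
  have hne : ∀ S ∈ ((Finset.univ : Finset (Fin n × Fin n)).powerset).erase ∅, S.Nonempty :=
    fun S hS => Finset.nonempty_of_ne_empty (Finset.mem_erase.1 hS).1
  rcases Nat.eq_zero_or_pos V.totalDegree with hdeg | hdeg
  · have hVC : V = C (coeff 0 V) := eq_C_of_totalDegree_eq_zero hdeg
    have hzero : ∀ S ∈ ((Finset.univ : Finset (Fin n × Fin n)).powerset).erase ∅,
        Φ (∏ x ∈ S, (Esh x.2 * Dlt x.1)) V = 0 := by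
      intro S hS
      obtain ⟨A, i, hAi⟩ := term_decomp S (hne S hS) V
      rw [hAi]
      have hz : shiftPoly (Pi.single i 1) V - V = 0 := by
        rw [hVC, shiftPoly_C, sub_self]
      rw [hz, map_zero]
    rw [hsplit, Finset.sum_eq_zero hzero, add_zero]
  · set D := Φ T V - V with hD
    have hDsum : D = ∑ S ∈ ((Finset.univ : Finset (Fin n × Fin n)).powerset).erase ∅,
        Φ (∏ x ∈ S, (Esh x.2 * Dlt x.1)) V := by
      rw [hD, hsplit]; ring
    have hDdeg : D.totalDegree < V.totalDegree := by
      rw [hDsum]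
      refine lt_of_le_of_lt (totalDegree_finset_sum _ _) ?_
      refine lt_of_le_of_lt (Finset.sup_le fun S hS => ?_)
        (show V.totalDegree - 1 < V.totalDegree by omega)
      obtain ⟨A, i, hAi⟩ := term_decomp S (hne S hS) V
      rw [hAi]
      refine le_trans (totalDegree_Φ_le _ _) ?_
      have := shift_sub_lt (Pi.single i 1) V hdeg
      omega
    have hrenV : ∀ i j : Fin n, i ≠ j → rename (Equiv.swap i j) V = -V := by
      intro i j hij
      rw [hV, rename_vandQ, Equiv.Perm.sign_swap hij]
      simp
    have hAlt : ∀ i j : Fin n, i ≠ j → rename (Equiv.swap i j) D = -D := by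
      intro i j hij
      have e1 : rename (Equiv.swap i j) (Φ T V)
          = Φ (ρ (Equiv.swap i j) T) (rename (Equiv.swap i j) V) := (Φ_rename _ _ _).symm
      have e2 : ρ (Equiv.swap i j) T = T := by rw [hTdef]; exact rho_T _
      have h1 : rename (Equiv.swap i j) (Φ T V) = -(Φ T V) := by
        rw [e1, e2, hrenV i j hij, map_neg]
      rw [hD, map_sub, h1, hrenV i j hij]
      ring
    have hD0 : D = 0 := by
      by_contra hne0
      have hsup : D.support.Nonempty :=
        Finset.nonempty_iff_ne_empty.2 fun h => hne0 (MvPolynomial.support_eq_empty.1 h)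
      obtain ⟨μ, hμ⟩ := hsup
      have hinj := alt_support_ne hAlt hμ
      have h1 := card_pairs_le_sum hinj
      have h2 : (μ.sum fun _ e => e) ≤ D.totalDegree := le_totalDegree hμ
      have h3 : (∑ i : Fin n, μ i) = μ.sum fun _ e => e :=
        (Finsupp.sum_fintype μ (fun _ e => e) (fun _ => rfl)).symm
      have h4 : V.totalDegree ≤ (pairs n).card := vandQ_deg
      omega
    exact sub_eq_zero.1 hD0
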